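/- Under the hypotheses that the control Hamiltonian Ĥ is invariant under Ψ̂_g and that for each λ_x ∈ T*_xM the equation 𝔽_cĤ(λ_x, u*_x(λ_x)) = 0 uniquely determines the optimal control u*_x(λ_x) ∈ ℝ^d, the optimal control map u*: T*M → E is G-equivariant: Ψ_g ∘ u* = u* ∘ T*Φ_{g⁻¹} for all g ∈ G. -/
import Mathlib


/-- Under the hypotheses that the control Hamiltonian `Ĥ` is invariant under
`Ψ̂_g(λ_x, u_x) = (T*Φ_{g⁻¹}(λ_x), Ψ_g(u_x))` and that, for each `λ_x ∈ T*_xM`, the equation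
`𝔽_cĤ(λ_x, u*_x(λ_x)) = 0` uniquely determines the optimal control `u*_x(λ_x) ∈ ℝ^d`, the
optimal control map `u* : T*M → E` is `G`-equivariant: `Ψ_g ∘ u* = u* ∘ T*Φ_{g⁻¹}`.

Here `⟨𝔽_cĤ(λ_x,u_x), w_x⟩ = d/dε|₀ Ĥ(λ_x, u_x + ε w_x)`, so the condition
`𝔽_cĤ(λ_x, u) = 0` reads: all directional derivatives of `Ĥ` in the control slot vanish. -/
theorem optimal_control_equivariant
    {G : Type*} [Group G] {M : Type*} [MulAction G M]
    {V : Type*} [AddCommGroup V] [Module ℝ V]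
    {d : ℕ}
    (dΦ : G → M → V ≃ₗ[ℝ] V)
    (σ : G → (Fin d → ℝ) ≃ₗ[ℝ] (Fin d → ℝ))
    (Hhat : M → Module.Dual ℝ V → (Fin d → ℝ) → ℝ)
    -- invariance of the control Hamiltonian: Ĥ ∘ Ψ̂_g = Ĥ
    (hinv : ∀ (g : G) (x : M) (lam : Module.Dual ℝ V) (u : Fin d → ℝ),
      Hhat (g • x) (lam.comp (dΦ g x).symm.toLinearMap) (σ g u) = Hhat x lam u)
    (ustar : M → Module.Dual ℝ V → (Fin d → ℝ))
    -- 𝔽_cĤ(λ_x, u) = 0 uniquely determines the optimal control u = u*_x(λ_x)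
    (hustar : ∀ (x : M) (lam : Module.Dual ℝ V) (u : Fin d → ℝ),
      (∀ w : Fin d → ℝ, deriv (fun ε : ℝ => Hhat x lam (u + ε • w)) 0 = 0)
        ↔ u = ustar x lam) :
    -- equivariance: Ψ_g ∘ u* = u* ∘ T*Φ_{g⁻¹}
    ∀ (g : G) (x : M) (lam : Module.Dual ℝ V),
      σ g (ustar x lam) = ustar (g • x) (lam.comp (dΦ g x).symm.toLinearMap) := by
  intro g x lam
  rw [← hustar]
  intro w
  have key : (fun ε : ℝ => Hhat (g • x) (lam.comp (dΦ g x).symm.toLinearMap)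
      (σ g (ustar x lam) + ε • w))
      = fun ε : ℝ => Hhat x lam (ustar x lam + ε • (σ g).symm w) := by
    funext ε
    rw [← hinv g x lam (ustar x lam + ε • (σ g).symm w)]
    congr 1
    simp [map_add, map_smul]
  rw [key]
  exact (hustar x lam (ustar x lam)).mpr rfl ((σ g).symm w)
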